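/- The function γ ↦ cos(3γ/2)/(sin γ)^{3/2} is strictly decreasing on the interval (0, π). -/

import Mathlib

open Real

theorem strictAntiOn_cos_div_sin_pow :
    StrictAntiOn (fun γ : ℝ => Real.cos (3 * γ / 2) / Real.sin γ ^ ((3 : ℝ) / 2))
      (Set.Ioo 0 π) := by
  have key : ∀ x ∈ Set.Ioo (0:ℝ) π,
      HasDerivAt (fun γ : ℝ => Real.cos (3 * γ / 2) / Real.sin γ ^ ((3 : ℝ) / 2))
        ((-Real.sin (3 * x / 2) * (3/2) * Real.sin x ^ ((3:ℝ)/2)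
          - Real.cos (3 * x / 2) * (Real.cos x * ((3:ℝ)/2) * Real.sin x ^ ((3:ℝ)/2 - 1)))
          / (Real.sin x ^ ((3:ℝ)/2)) ^ 2) x := by
    intro x hx
    have hs : 0 < Real.sin x := Real.sin_pos_of_pos_of_lt_pi hx.1 hx.2
    have h1 : HasDerivAt (fun γ : ℝ => 3 * γ / 2) (3/2) x := by
      simpa using ((hasDerivAt_id x).const_mul 3).div_const 2
    have hnum : HasDerivAt (fun γ : ℝ => Real.cos (3 * γ / 2))
        (-Real.sin (3 * x / 2) * (3/2)) x := by
      have := (Real.hasDerivAt_cos (3 * x / 2)).comp x h1; exact this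
    have hden : HasDerivAt (fun γ : ℝ => Real.sin γ ^ ((3:ℝ)/2))
        (Real.cos x * ((3:ℝ)/2) * Real.sin x ^ ((3:ℝ)/2 - 1)) x :=
      (Real.hasDerivAt_sin x).rpow_const (Or.inl hs.ne')
    exact hnum.div hden (by positivity)
  apply strictAntiOn_of_deriv_neg (convex_Ioo 0 π)
  · intro x hx
    exact (key x hx).continuousAt.continuousWithinAt
  · intro x hx
    rw [interior_Ioo] at hx
    rw [(key x hx).deriv]
    have hs : 0 < Real.sin x := Real.sin_pos_of_pos_of_lt_pi hx.1 hx.2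
    have hc : 0 < Real.cos (x / 2) :=
      Real.cos_pos_of_mem_Ioo ⟨by linarith [hx.1, pi_pos], by linarith [hx.2]⟩
    apply div_neg_of_neg_of_pos _ (by positivity)
    have e1 : Real.sin x ^ ((3:ℝ)/2) = Real.sin x ^ ((1:ℝ)/2) * Real.sin x := by
      rw [show ((3:ℝ)/2) = (1:ℝ)/2 + 1 by norm_num, Real.rpow_add hs, Real.rpow_one]
    have e2 : Real.sin x ^ ((3:ℝ)/2 - 1) = Real.sin x ^ ((1:ℝ)/2) := by norm_num
    have e3 : Real.sin (3 * x / 2) * Real.sin x + Real.cos (3 * x / 2) * Real.cos x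
        = Real.cos (x / 2) := by
      rw [show x / 2 = 3 * x / 2 - x by ring, Real.cos_sub]; ring
    rw [e1, e2]
    have h12 : 0 < Real.sin x ^ ((1:ℝ)/2) := Real.rpow_pos_of_pos hs _
    nlinarith [h12, hc, e3]
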